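/- arXiv:0710.3681 — 4 statements merged into one kernel-verified Lean document; each statement's English description precedes it below -/
import Mathlib

section
/- For real numbers a > b ≥ c > d > 0, exp(1 - L(c,d)/L(a,b)) < I(a,b)/I(c,d) < exp(L(a,b)/L(c,d) - 1), where L and I are the logarithmic and identric means. -/
set_option maxHeartbeats 1000000

noncomputable def logMean (x y : ℝ) : ℝ :=
  if x = y then x else (x - y) / (Real.log x - Real.log y)

noncomputable def identricMean (x y : ℝ) : ℝ :=
  if x = y then x else (1 / Real.exp 1) * (x ^ x / y ^ y) ^ (1 / (x - y))

lemma sinh_le_mul_cosh {x : ℝ} (hx : 0 ≤ x) : Real.sinh x ≤ x * Real.cosh x := by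
  have hd : ∀ y : ℝ, HasDerivAt (fun z : ℝ => z * Real.cosh z - Real.sinh z)
      (y * Real.sinh y) y := by
    intro y
    have h2 := ((hasDerivAt_id y).mul (Real.hasDerivAt_cosh y)).sub (Real.hasDerivAt_sinh y)
    refine h2.congr_deriv ?_
    simp only [id_eq]
    ring
  have key : MonotoneOn (fun z : ℝ => z * Real.cosh z - Real.sinh z) (Set.Ici 0) := by
    apply monotoneOn_of_deriv_nonneg (convex_Ici 0)
    · exact ((continuous_id.mul Real.continuous_cosh).sub Real.continuous_sinh).continuousOn
    · intro y _
      exact (hd y).differentiableAt.differentiableWithinAt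
    · intro y hy
      rw [interior_Ici, Set.mem_Ioi] at hy
      rw [(hd y).deriv]
      have : 0 ≤ Real.sinh y := Real.sinh_nonneg_iff.2 hy.le
      positivity
  have h0 := key (Set.self_mem_Ici (a := (0:ℝ))) hx hx
  simp at h0
  linarith

/-- Key facts: `G ≤ L` and `L ≤ A` in cleared-denominator form. -/
lemma core_GA {x y : ℝ} (hy : 0 < y) (hxy : y < x) :
    Real.sqrt (x * y) * (Real.log x - Real.log y) ≤ x - y ∧
    2 * (x - y) ≤ (x + y) * (Real.log x - Real.log y) := by
  have hx : 0 < x := hy.trans hxy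
  have hs : 0 < Real.sqrt x := Real.sqrt_pos.2 hx
  have ht : 0 < Real.sqrt y := Real.sqrt_pos.2 hy
  set s := Real.sqrt x with hsdef
  set t := Real.sqrt y with htdef
  have hs2 : s * s = x := Real.mul_self_sqrt hx.le
  have ht2 : t * t = y := Real.mul_self_sqrt hy.le
  set w := Real.log s - Real.log t with hwdef
  have hw2 : Real.log x - Real.log y = 2 * w := by
    rw [hwdef, hsdef, htdef, Real.log_sqrt hx.le, Real.log_sqrt hy.le]; ring
  have hwpos : 0 ≤ w := by
    have h := Real.log_lt_log hy hxy
    nlinarith [hw2]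
  have hew : Real.exp w = s / t := by
    rw [hwdef, Real.exp_sub, Real.exp_log hs, Real.exp_log ht]
  have hew' : Real.exp (-w) = t / s := by
    rw [hwdef, neg_sub, Real.exp_sub, Real.exp_log hs, Real.exp_log ht]
  have hst : Real.sqrt (x * y) = s * t := by
    rw [hsdef, htdef, Real.sqrt_mul hx.le]
  have hstpos : 0 < s * t := mul_pos hs ht
  have hsinh : Real.sinh w = (x - y) / (2 * (s * t)) := by
    rw [Real.sinh_eq, hew, hew', div_sub_div _ _ ht.ne' hs.ne', ← hs2, ← ht2]
    ring
  have hcosh : Real.cosh w = (x + y) / (2 * (s * t)) := by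
    rw [Real.cosh_eq, hew, hew', div_add_div _ _ ht.ne' hs.ne', ← hs2, ← ht2]
    ring
  constructor
  · have h1 : w ≤ Real.sinh w := Real.self_le_sinh_iff.2 hwpos
    rw [hsinh] at h1
    have h2 := (le_div_iff₀ (by positivity : (0:ℝ) < 2 * (s * t))).1 h1
    have h3 : s * t * (2 * w) = w * (2 * (s * t)) := by ring
    rw [hst, hw2]
    linarith
  · have h1 : Real.sinh w ≤ w * Real.cosh w := sinh_le_mul_cosh hwpos
    rw [hsinh, hcosh] at h1
    have h2 := mul_le_mul_of_nonneg_right h1 (by positivity : (0:ℝ) ≤ 2 * (s * t))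
    have e1 : (x - y) / (2 * (s * t)) * (2 * (s * t)) = x - y :=
      div_mul_cancel₀ _ (by positivity)
    have e2 : w * ((x + y) / (2 * (s * t))) * (2 * (s * t)) = w * (x + y) := by
      field_simp
    have h4 : x - y ≤ w * (x + y) := by rw [← e1, ← e2]; exact h2
    rw [hw2]
    have e3 : (x + y) * (2 * w) = 2 * (w * (x + y)) := by ring
    linarith

/-- Key facts: `y < L` and `L < x` in cleared-denominator form. -/
lemma core_yx {x y : ℝ} (hy : 0 < y) (hxy : y < x) :
    y * (Real.log x - Real.log y) < x - y ∧ x - y < x * (Real.log x - Real.log y) := by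
  have hx : 0 < x := hy.trans hxy
  have h1 : Real.log (x / y) < x / y - 1 := by
    apply Real.log_lt_sub_one_of_pos (by positivity)
    intro h
    rw [div_eq_one_iff_eq hy.ne'] at h
    exact hxy.ne' h
  have h2 : Real.log (y / x) < y / x - 1 := by
    apply Real.log_lt_sub_one_of_pos (by positivity)
    intro h
    rw [div_eq_one_iff_eq hx.ne'] at h
    exact hxy.ne h
  rw [Real.log_div hx.ne' hy.ne'] at h1
  rw [Real.log_div hy.ne' hx.ne'] at h2
  constructor
  · have h3 := mul_lt_mul_of_pos_left h1 hy
    have e : y * (x / y - 1) = x - y := by field_simp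
    linarith
  · have h3 := mul_lt_mul_of_pos_left h2 hx
    have e : x * (y / x - 1) = y - x := by field_simp
    have e2 : x * (Real.log y - Real.log x) = -(x * (Real.log x - Real.log y)) := by ring
    linarith

lemma identric_eq {x y : ℝ} (hy : 0 < y) (hxy : y < x) :
    identricMean x y = Real.exp ((x * Real.log x - y * Real.log y) / (x - y) - 1) := by
  have hx : 0 < x := hy.trans hxy
  have hxy' : x - y ≠ 0 := sub_ne_zero_of_ne hxy.ne'
  unfold identricMean
  rw [if_neg hxy.ne', Real.rpow_def_of_pos hx, Real.rpow_def_of_pos hy, ← Real.exp_sub,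
    Real.rpow_def_of_pos (Real.exp_pos _), Real.log_exp,
    show (1:ℝ)/Real.exp 1 = Real.exp (-1) by rw [Real.exp_neg, one_div], ← Real.exp_add]
  congr 1
  field_simp
  ring

/-- The central inequality, with all transcendental information abstracted away. -/
lemma main_ineq (a b c d L1 L0 m : ℝ)
    (hd : 0 < d) (hdL0 : d < L0) (hL0c : L0 < c) (hbc : c ≤ b) (hbL1 : b < L1)
    (hL1a : L1 < a)
    (hG1 : a * b ≤ L1 * L1) (hG0 : c * d ≤ L0 * L0)
    (hA1 : 2 * L1 ≤ a + b) (hA0 : 2 * L0 ≤ c + d)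
    (hm1 : b - c ≤ b * m) (hm2 : c * m ≤ b - c) :
    1 - L0 / L1 < a / L1 + m - d / L0 ∧ a / L1 + m - d / L0 < L1 / L0 - 1 := by
  have hL0pos : 0 < L0 := hd.trans hdL0
  have hc : 0 < c := hL0pos.trans hL0c
  have hb : 0 < b := lt_of_lt_of_le hc hbc
  have hL1pos : 0 < L1 := hb.trans hbL1
  have ha : 0 < a := hL1pos.trans hL1a
  constructor
  · have hsum : (a / L1 + m - d / L0) - (1 - L0 / L1) =
        ((a + b) / L1 - 2) + (b - L0) * (1 / b - 1 / L1) + (m - L0 * (1 / c - 1 / b))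
          + (L0 / c - d / L0) := by
      field_simp
      ring
    have hT1 : (0:ℝ) ≤ (a + b) / L1 - 2 := by
      rw [sub_nonneg, le_div_iff₀ hL1pos]; linarith
    have hT2 : (0:ℝ) < (b - L0) * (1 / b - 1 / L1) := by
      apply mul_pos (by linarith)
      rw [sub_pos]
      exact one_div_lt_one_div_of_lt hb hbL1
    have hT3 : (0:ℝ) ≤ m - L0 * (1 / c - 1 / b) := by
      have h1 : L0 * (1 / c - 1 / b) ≤ c * (1 / c - 1 / b) := by
        apply mul_le_mul_of_nonneg_right hL0c.le
        rw [sub_nonneg]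
        exact one_div_le_one_div_of_le hc hbc
      have h2 : c * (1 / c - 1 / b) = 1 - c / b := by field_simp
      have h3 : 1 - c / b ≤ m := by
        have e : 1 - c / b = (b - c) / b := by field_simp
        rw [e, div_le_iff₀ hb]
        have : m * b = b * m := by ring
        linarith
      linarith
    have hT4 : (0:ℝ) ≤ L0 / c - d / L0 := by
      rw [sub_nonneg, div_le_div_iff₀ hL0pos hc]
      have : d * c = c * d := by ring
      linarith
    linarith
  · have hsum : (L1 / L0 - 1) - (a / L1 + m - d / L0) =
        (L1 - c) * (1 / L0 - 1 / c) + ((c + d) / L0 - 2) + (L1 * (1 / c - 1 / b) - m)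
          + (L1 / b - a / L1) := by
      field_simp
      ring
    have hU1 : (0:ℝ) < (L1 - c) * (1 / L0 - 1 / c) := by
      apply mul_pos (by linarith)
      rw [sub_pos]
      exact one_div_lt_one_div_of_lt hL0pos hL0c
    have hU2 : (0:ℝ) ≤ (c + d) / L0 - 2 := by
      rw [sub_nonneg, le_div_iff₀ hL0pos]; linarith
    have hU3 : (0:ℝ) ≤ L1 * (1 / c - 1 / b) - m := by
      have h0 : (0:ℝ) ≤ 1 / c - 1 / b := by
        rw [sub_nonneg]; exact one_div_le_one_div_of_le hc hbc
      have h1 : b * (1 / c - 1 / b) ≤ L1 * (1 / c - 1 / b) :=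
        mul_le_mul_of_nonneg_right hbL1.le h0
      have h2 : b * (1 / c - 1 / b) = b / c - 1 := by field_simp
      have h3 : m ≤ b / c - 1 := by
        have e : b / c - 1 = (b - c) / c := by field_simp
        rw [e, le_div_iff₀ hc]
        have : m * c = c * m := by ring
        linarith
      linarith
    have hU4 : (0:ℝ) ≤ L1 / b - a / L1 := by
      rw [sub_nonneg, div_le_div_iff₀ hL1pos hb]
      nlinarith
    linarith

theorem stmt7 (a b c d : ℝ) (hab : a > b) (hbc : b ≥ c) (hcd : c > d) (hd : d > 0) :
    Real.exp (1 - logMean c d / logMean a b) < identricMean a b / identricMean c d ∧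
    identricMean a b / identricMean c d < Real.exp (logMean a b / logMean c d - 1) := by
  have hc : 0 < c := hd.trans hcd
  have hb : 0 < b := lt_of_lt_of_le hc hbc
  have ha : 0 < a := hb.trans hab
  have hl1 : 0 < Real.log a - Real.log b := sub_pos.2 (Real.log_lt_log hb hab)
  have hl0 : 0 < Real.log c - Real.log d := sub_pos.2 (Real.log_lt_log hd hcd)
  have hab' : 0 < a - b := sub_pos.2 hab
  have hcd' : 0 < c - d := sub_pos.2 hcd
  have hlm1 : logMean a b = (a - b) / (Real.log a - Real.log b) := by
    unfold logMean; rw [if_neg hab.ne']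
  have hlm0 : logMean c d = (c - d) / (Real.log c - Real.log d) := by
    unfold logMean; rw [if_neg hcd.ne']
  obtain ⟨hyx1a, hyx1b⟩ := core_yx hb hab
  obtain ⟨hyx0a, hyx0b⟩ := core_yx hd hcd
  obtain ⟨hga, haa⟩ := core_GA hb hab
  obtain ⟨hgc, hac⟩ := core_GA hd hcd
  have hbL1 : b < (a - b) / (Real.log a - Real.log b) := by
    rw [lt_div_iff₀ hl1]; exact hyx1a
  have hL1a : (a - b) / (Real.log a - Real.log b) < a := by
    rw [div_lt_iff₀ hl1]; exact hyx1b
  have hdL0 : d < (c - d) / (Real.log c - Real.log d) := by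
    rw [lt_div_iff₀ hl0]; exact hyx0a
  have hL0c : (c - d) / (Real.log c - Real.log d) < c := by
    rw [div_lt_iff₀ hl0]; exact hyx0b
  have hG1 : a * b ≤ ((a - b) / (Real.log a - Real.log b)) * ((a - b) / (Real.log a - Real.log b)) := by
    have h1 : Real.sqrt (a * b) ≤ (a - b) / (Real.log a - Real.log b) := by
      rw [le_div_iff₀ hl1]; exact hga
    nlinarith [Real.mul_self_sqrt (show (0:ℝ) ≤ a * b by positivity), Real.sqrt_nonneg (a * b)]
  have hG0 : c * d ≤ ((c - d) / (Real.log c - Real.log d)) * ((c - d) / (Real.log c - Real.log d)) := by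
    have h1 : Real.sqrt (c * d) ≤ (c - d) / (Real.log c - Real.log d) := by
      rw [le_div_iff₀ hl0]; exact hgc
    nlinarith [Real.mul_self_sqrt (show (0:ℝ) ≤ c * d by positivity), Real.sqrt_nonneg (c * d)]
  have hA1 : 2 * ((a - b) / (Real.log a - Real.log b)) ≤ a + b := by
    have h := (div_le_div_iff₀ hl1 (by norm_num : (0:ℝ) < 2)).2
      (by linarith : (a - b) * 2 ≤ (a + b) * (Real.log a - Real.log b))
    linarith
  have hA0 : 2 * ((c - d) / (Real.log c - Real.log d)) ≤ c + d := by
    have h := (div_le_div_iff₀ hl0 (by norm_num : (0:ℝ) < 2)).2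
      (by linarith : (c - d) * 2 ≤ (c + d) * (Real.log c - Real.log d))
    linarith
  have hm1 : b - c ≤ b * (Real.log b - Real.log c) := by
    rcases eq_or_lt_of_le hbc with h | h
    · rw [← h]; simp
    · exact ((core_yx hc h).2).le
  have hm2 : c * (Real.log b - Real.log c) ≤ b - c := by
    rcases eq_or_lt_of_le hbc with h | h
    · rw [← h]; simp
    · exact ((core_yx hc h).1).le
  have key := main_ineq a b c d ((a - b) / (Real.log a - Real.log b))
    ((c - d) / (Real.log c - Real.log d)) (Real.log b - Real.log c)
    hd hdL0 hL0c hbc hbL1 hL1a hG1 hG0 hA1 hA0 hm1 hm2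
  have hratio : identricMean a b / identricMean c d =
      Real.exp (a / ((a - b) / (Real.log a - Real.log b)) + (Real.log b - Real.log c)
        - d / ((c - d) / (Real.log c - Real.log d))) := by
    rw [identric_eq hb hab, identric_eq hd hcd, ← Real.exp_sub]
    congr 1
    rw [div_div_eq_mul_div, div_div_eq_mul_div]
    field_simp
    ring
  rw [hlm1, hlm0, hratio]
  constructor
  · rw [Real.exp_lt_exp]
    exact key.1
  · rw [Real.exp_lt_exp]
    exact key.2
end

section
/- For real numbers a > b ≥ c > d > 0, L(a,b)/L(c,d) > 1 + ln(G(a,b)/G(c,d)) > 2ab/(ab + cd), where L is the logarithmic mean and G the geometric mean. -/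
noncomputable def geomMean (x y : ℝ) : ℝ := Real.sqrt (x * y)

/-- Key lemma: the logarithmic mean is below the arithmetic mean, in the
form `2(t-1) < (t+1) log t` for `t > 1`. -/
lemma keyB {t : ℝ} (ht : 1 < t) : 2 * (t - 1) < (t + 1) * Real.log t := by
  have h0 : (0:ℝ) < t := by linarith
  set f : ℝ → ℝ := fun x => (x + 1) * Real.log x - 2 * (x - 1) with hf
  have hd : ∀ x ∈ interior (Set.Ici (1:ℝ)), 0 < deriv f x := by
    intro x hx
    rw [interior_Ici] at hx
    have hx1 : (1:ℝ) < x := hx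
    have hx0 : (0:ℝ) < x := by linarith
    have h1 : HasDerivAt f (Real.log x + 1 / x - 1) x := by
      have h2 : HasDerivAt (fun y : ℝ => (y + 1) * Real.log y)
          (1 * Real.log x + (x + 1) * x⁻¹) x :=
        (((hasDerivAt_id x).add_const 1)).mul (Real.hasDerivAt_log hx0.ne')
      have h3 : HasDerivAt f (1 * Real.log x + (x + 1) * x⁻¹ - 2) x := by
        simpa [hf, Pi.sub_def] using h2.sub ((hasDerivAt_id x).sub_const 1 |>.const_mul 2)
      convert h3 using 1
      field_simp
      ring
    rw [h1.deriv]
    have : Real.log (1/x) < 1/x - 1 :=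
      Real.log_lt_sub_one_of_pos (by positivity) (by
        intro h; rw [div_eq_one_iff_eq (by positivity)] at h; linarith)
    rw [Real.log_div one_ne_zero hx0.ne', Real.log_one] at this
    linarith
  have hcont : ContinuousOn f (Set.Ici 1) := by
    apply ContinuousOn.sub
    · exact (continuousOn_id.add continuousOn_const).mul
        (Real.continuousOn_log.mono (by intro x hx; simp at hx ⊢; linarith))
    · fun_prop
  have hmono := strictMonoOn_of_deriv_pos (convex_Ici 1) hcont hd
  have := hmono (Set.self_mem_Ici) (Set.mem_Ici.2 ht.le) ht
  simp [hf] at this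
  linarith

set_option maxHeartbeats 1000000 in
theorem stmt11 (a b c d : ℝ) (hab : a > b) (hbc : b ≥ c) (hcd : c > d) (hd : d > 0) :
    logMean a b / logMean c d > 1 + Real.log (geomMean a b / geomMean c d) ∧
    1 + Real.log (geomMean a b / geomMean c d) > 2 * a * b / (a * b + c * d) := by
  have hc : (0:ℝ) < c := hd.trans hcd
  have hb : (0:ℝ) < b := hc.trans_le hbc
  have ha : (0:ℝ) < a := hb.trans hab
  set la := Real.log a with hla
  set lb := Real.log b with hlb
  set lc := Real.log c with hlc
  set ld := Real.log d with hld
  have hu : 0 < la - lb := sub_pos.2 (Real.log_lt_log hb hab)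
  have hv : 0 < lc - ld := sub_pos.2 (Real.log_lt_log hd hcd)
  have hlbc : lc ≤ lb := Real.log_le_log hc hbc
  have hL1 : logMean a b = (a - b) / (la - lb) := by
    rw [logMean, if_neg (ne_of_gt hab)]
  have hL2 : logMean c d = (c - d) / (lc - ld) := by
    rw [logMean, if_neg (ne_of_gt hcd)]
  set L2 : ℝ := (c - d) / (lc - ld) with hL2def
  have hL2pos : 0 < L2 := div_pos (sub_pos.2 hcd) hv
  -- from keyB with t = c/d : (c+d)(lc-ld) > 2(c-d)
  have hBcd : 2 * (c/d - 1) < (c/d + 1) * Real.log (c/d) :=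
    keyB (by rw [lt_div_iff₀ hd]; linarith)
  have hlogcd : Real.log (c/d) = lc - ld := Real.log_div hc.ne' hd.ne'
  have hBcd' : 2 * (c - d) < (c + d) * (lc - ld) := by
    rw [hlogcd] at hBcd
    have h := mul_lt_mul_of_pos_left hBcd hd
    have hd' : d ≠ 0 := hd.ne'
    field_simp at h
    nlinarith [h]
  have hkey3 : L2 * (1 + (lc - ld)/2) ≤ c := by
    rw [hL2def, div_mul_eq_mul_div, div_le_iff₀ hv]
    nlinarith [hBcd']
  have hL2c : L2 < c := by nlinarith [hkey3, mul_pos hL2pos hv]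
  have hL2b : L2 < b := hL2c.trans_le hbc
  -- key1 : b (1 + (la-lb)/2) ≤ L1
  have hexp : b * Real.exp (la - lb) = a := by
    rw [Real.exp_sub, hla, hlb, Real.exp_log ha, Real.exp_log hb]
    field_simp
  have hquad := Real.quadratic_le_exp_of_nonneg hu.le
  have hkey1 : b * (1 + (la - lb)/2) ≤ (a - b) / (la - lb) := by
    rw [le_div_iff₀ hu]
    nlinarith [hexp, mul_le_mul_of_nonneg_left hquad hb.le]
  -- c (lb - lc) ≤ b - c
  have hbc' : c * (lb - lc) ≤ b - c := by
    have h := Real.log_le_sub_one_of_pos (show (0:ℝ) < b/c by positivity)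
    rw [Real.log_div hb.ne' hc.ne'] at h
    have h2 := mul_le_mul_of_nonneg_left h hc.le
    have hc' : c ≠ 0 := hc.ne'
    field_simp at h2
    nlinarith [h2]
  -- value of the geometric mean term
  have hG : Real.log (geomMean a b / geomMean c d) = (la + lb - lc - ld)/2 := by
    rw [geomMean, geomMean, ← Real.sqrt_div (by positivity),
      Real.log_sqrt (by positivity),
      Real.log_div (mul_pos ha hb).ne' (mul_pos hc hd).ne',
      Real.log_mul ha.ne' hb.ne', Real.log_mul hc.ne' hd.ne']
    ring
  constructor
  · -- first inequality
    rw [hL1, hL2, hG, gt_iff_lt, lt_div_iff₀ hL2pos]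
    have h5 : L2 * (lb - lc) ≤ c * (lb - lc) :=
      mul_le_mul_of_nonneg_right hL2c.le (sub_nonneg.2 hlbc)
    have h6 : L2 * ((la - lb)/2) < b * ((la - lb)/2) :=
      mul_lt_mul_of_pos_right hL2b (by linarith)
    linarith [hkey3, h5, hbc', h6, hkey1]
  · -- second inequality
    rw [hG, gt_iff_lt, div_lt_iff₀ (by positivity)]
    have hPQ : c * d < a * b := by
      calc c * d < a * d := by nlinarith
        _ < a * b := by nlinarith
    have hBT : 2 * ((a*b)/(c*d) - 1) < ((a*b)/(c*d) + 1) * Real.log ((a*b)/(c*d)) :=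
      keyB (by rw [lt_div_iff₀ (by positivity)]; linarith)
    have hlogPQ : Real.log ((a*b)/(c*d)) = la + lb - lc - ld := by
      rw [Real.log_div (mul_pos ha hb).ne' (mul_pos hc hd).ne',
        Real.log_mul ha.ne' hb.ne', Real.log_mul hc.ne' hd.ne']
      ring
    rw [hlogPQ] at hBT
    have h := mul_lt_mul_of_pos_left hBT (mul_pos hc hd)
    have hcd0 : c * d ≠ 0 := (mul_pos hc hd).ne'
    field_simp at h
    nlinarith [h]
end

section
/- For real numbers a > b ≥ c > d > 0, L(a,b)/L(c,d) > ln(G(a,b)/G(c,d)) / ln(I(a,b)/I(c,d)), where L, G, I are the logarithmic, geometric, and identric means. -/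
section helpers

private lemma aux1' {t : ℝ} (ht : 1 < t) : 2 * Real.log t < t - 1/t := by
  have key : StrictMonoOn (fun s : ℝ => s - s⁻¹ - 2 * Real.log s) (Set.Ici 1) := by
    apply strictMonoOn_of_deriv_pos (convex_Ici 1)
    · apply ContinuousOn.sub
      · apply ContinuousOn.sub continuousOn_id
        exact ContinuousOn.inv₀ continuousOn_id (fun x hx => by
          simp only [Set.mem_Ici] at hx; exact (by linarith : (0:ℝ) < x).ne')
      · exact (continuousOn_const.mul (Real.continuousOn_log.mono (fun x hx => by
          simp only [Set.mem_Ici] at hx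
          simp only [Set.mem_compl_iff, Set.mem_singleton_iff]
          exact (by linarith : (0:ℝ) < x).ne')))
    · intro s hs
      rw [interior_Ici] at hs
      have hs1 : 1 < s := hs
      have hs0 : (0:ℝ) < s := by linarith
      have hd : HasDerivAt (fun s : ℝ => s - s⁻¹ - 2 * Real.log s)
          (1 - (-(s^2)⁻¹) - 2 * s⁻¹) s := by
        exact ((hasDerivAt_id s).sub (hasDerivAt_inv hs0.ne')).sub
          ((Real.hasDerivAt_log hs0.ne').const_mul 2)
      rw [hd.deriv]
      have h1 : s⁻¹ < 1 := by rw [inv_lt_one_iff₀]; right; exact hs1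
      have h2 : (0:ℝ) < 1 - s⁻¹ := by linarith
      have : 1 - (-(s^2)⁻¹) - 2 * s⁻¹ = (1 - s⁻¹)^2 := by ring
      rw [this]
      positivity
  have h := key (by simp : (1:ℝ) ∈ Set.Ici 1) (Set.mem_Ici.2 ht.le) ht
  simp only [Real.log_one] at h
  rw [one_div]
  norm_num at h
  linarith

private lemma aux2' {t : ℝ} (ht : 1 < t) : 2*(t-1)/(t+1) < Real.log t := by
  have key : StrictMonoOn (fun s : ℝ => Real.log s - 2 + 4 * (s+1)⁻¹) (Set.Ici 1) := by
    apply strictMonoOn_of_deriv_pos (convex_Ici 1)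
    · apply ContinuousOn.add
      · apply ContinuousOn.sub _ continuousOn_const
        exact Real.continuousOn_log.mono (fun x hx => by
          simp only [Set.mem_Ici] at hx
          simp only [Set.mem_compl_iff, Set.mem_singleton_iff]
          exact (by linarith : (0:ℝ) < x).ne')
      · exact continuousOn_const.mul (ContinuousOn.inv₀
          (continuousOn_id.add continuousOn_const) (fun x hx => by
            simp only [Set.mem_Ici] at hx
            exact (by linarith : (0:ℝ) < x + 1).ne'))
    · intro s hs
      rw [interior_Ici] at hs
      have hs1 : 1 < s := hs
      have hs0 : (0:ℝ) < s := by linarith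
      have hsp : (0:ℝ) < s + 1 := by linarith
      have hd : HasDerivAt (fun s : ℝ => Real.log s - 2 + 4 * (s+1)⁻¹)
          (s⁻¹ + 4 * (-1 / (s+1)^2)) s := by
        apply HasDerivAt.add
        · exact ((Real.hasDerivAt_log hs0.ne').sub_const 2)
        · exact (((hasDerivAt_id' s)).add_const 1).inv hsp.ne' |>.const_mul 4
      rw [hd.deriv]
      have heq : s⁻¹ + 4 * (-1 / (s+1)^2) = (s-1)^2 / (s * (s+1)^2) := by
        field_simp; ring
      rw [heq]
      exact div_pos (pow_pos (by linarith) 2) (by positivity)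
  have h := key (by simp : (1:ℝ) ∈ Set.Ici 1) (Set.mem_Ici.2 ht.le) ht
  simp only [Real.log_one] at h
  norm_num at h
  have htp : (0:ℝ) < t + 1 := by linarith
  have heq : 2*(t-1)/(t+1) = 2 - 4 * (t+1)⁻¹ := by field_simp; ring
  rw [heq]
  linarith

/-- L < A in product form -/
private lemma pairA {x y : ℝ} (hy : 0 < y) (hxy : y < x) :
    2*(x-y) < (Real.log x - Real.log y)*(x+y) := by
  have hx : 0 < x := hy.trans hxy
  have ht : 1 < x/y := (one_lt_div hy).2 hxy
  have h := aux2' ht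
  rw [Real.log_div hx.ne' hy.ne'] at h
  have he : 2*((x/y)-1)/((x/y)+1) = 2*(x-y)/(x+y) := by
    rw [div_eq_div_iff (by positivity) (by positivity)]
    field_simp
  rw [he, div_lt_iff₀ (by linarith : (0:ℝ) < x+y)] at h
  linarith [h]

/-- H < L in product form -/
private lemma pairH {x y : ℝ} (hy : 0 < y) (hxy : y < x) :
    2*(Real.log x - Real.log y)*(x*y) < x^2 - y^2 := by
  have hx : 0 < x := hy.trans hxy
  have ht : 1 < x/y := (one_lt_div hy).2 hxy
  have h := aux1' ht
  rw [Real.log_div hx.ne' hy.ne'] at h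
  have he : x/y - 1/(x/y) = (x^2 - y^2)/(x*y) := by
    field_simp
  rw [he, lt_div_iff₀ (by positivity : (0:ℝ) < x*y)] at h
  linarith [h]

end helpers

set_option maxHeartbeats 1600000 in
theorem stmt12 (a b c d : ℝ) (hab : a > b) (hbc : b ≥ c) (hcd : c > d) (hd : d > 0) :
    logMean a b / logMean c d >
      Real.log (geomMean a b / geomMean c d) /
        Real.log (identricMean a b / identricMean c d) := by
  have hc : 0 < c := hd.trans hcd
  have hb : 0 < b := lt_of_lt_of_le hc hbc
  have ha : 0 < a := hb.trans hab
  have hne1 : a ≠ b := ne_of_gt hab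
  have hne2 : c ≠ d := ne_of_gt hcd
  obtain ⟨p, hp⟩ : ∃ p:ℝ, p = Real.log a := ⟨_, rfl⟩
  obtain ⟨q, hq⟩ : ∃ q:ℝ, q = Real.log b := ⟨_, rfl⟩
  obtain ⟨r, hr⟩ : ∃ r:ℝ, r = Real.log c := ⟨_, rfl⟩
  obtain ⟨s, hs⟩ : ∃ s:ℝ, s = Real.log d := ⟨_, rfl⟩
  have hpq : q < p := by rw [hp, hq]; exact Real.log_lt_log hb hab
  have hrs : s < r := by rw [hr, hs]; exact Real.log_lt_log hd hcd
  have hrq : r ≤ q := by rw [hr, hq]; exact Real.log_le_log hc hbc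
  have hDa : 0 < p - q := by linarith
  have hDc : 0 < r - s := by linarith
  obtain ⟨L1, hL1def⟩ : ∃ L1:ℝ, L1 = (a-b)/(p-q) := ⟨_, rfl⟩
  obtain ⟨L2, hL2def⟩ : ∃ L2:ℝ, L2 = (c-d)/(r-s) := ⟨_, rfl⟩
  have hL1 : 0 < L1 := hL1def ▸ div_pos (by linarith) hDa
  have hL2 : 0 < L2 := hL2def ▸ div_pos (by linarith) hDc
  have hL1e : L1*(p-q) = a-b := by
    rw [hL1def]; field_simp
  have hL2e : L2*(r-s) = c-d := by
    rw [hL2def]; field_simp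
  -- classical mean inequalities H < L < A for both pairs
  have FA1 := pairA hb hab
  have FH1 := pairH hb hab
  have FA2 := pairA hd hcd
  have FH2 := pairH hd hcd
  rw [← hp, ← hq] at FA1 FH1
  rw [← hr, ← hs] at FA2 FH2
  have hA1 : 2*L1 < a+b := by
    refine lt_of_mul_lt_mul_right ?_ hDa.le
    have k : (2*L1)*(p-q) = 2*(a-b) := by linear_combination 2*hL1e
    rw [k]; linarith [FA1]
  have hH1 : 2*(a*b) < L1*(a+b) := by
    refine lt_of_mul_lt_mul_right ?_ hDa.le
    have k : (L1*(a+b))*(p-q) = a^2 - b^2 := by linear_combination (a+b)*hL1e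
    rw [k]; linarith [FH1]
  have hA2 : 2*L2 < c+d := by
    refine lt_of_mul_lt_mul_right ?_ hDc.le
    have k : (2*L2)*(r-s) = 2*(c-d) := by linear_combination 2*hL2e
    rw [k]; linarith [FA2]
  have hH2 : 2*(c*d) < L2*(c+d) := by
    refine lt_of_mul_lt_mul_right ?_ hDc.le
    have k : (L2*(c+d))*(r-s) = c^2 - d^2 := by linear_combination (c+d)*hL2e
    rw [k]; linarith [FH2]
  have hL1b : b < L1 := by
    refine lt_of_mul_lt_mul_right ?_ (by linarith : (0:ℝ) ≤ a+b)
    linarith [hH1, mul_pos hb (sub_pos.2 hab)]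
  have hL2c : L2 < c := by linarith
  have hL2d : d < L2 := by
    refine lt_of_mul_lt_mul_right ?_ (by linarith : (0:ℝ) ≤ c+d)
    linarith [hH2, mul_pos hd (sub_pos.2 hcd)]
  have hL12 : L2 < L1 := by linarith
  obtain ⟨g, hgdef⟩ : ∃ g:ℝ, g = ((p+q) - (r+s))/2 := ⟨_, rfl⟩
  have hgge : (p-q) + (r-s) ≤ 2*g := by rw [hgdef]; linarith
  have hgpos : 0 < g := by linarith
  -- the key polynomial inequality
  have hT : 0 < 2*(L1-L2)*L2*g + (a+b)*L2 - L1*(c+d) := by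
    have h1 : (L1-L2)*(L2*((p-q)+(r-s))) ≤ (L1-L2)*(L2*(2*g)) := by
      apply mul_le_mul_of_nonneg_left _ (by linarith)
      exact mul_le_mul_of_nonneg_left hgge hL2.le
    have h2 : 0 ≤ (L1-L2)*(L2*(p-q)) :=
      mul_nonneg (by linarith) (mul_nonneg hL2.le hDa.le)
    have h3 : (L1-L2)*(L2*(r-s)) = (L1-L2)*(c-d) := by rw [hL2e]
    have h4 : 2*L1*d < (a+b)*d := by linarith [mul_pos (show (0:ℝ) < a+b-2*L1 by linarith) hd]
    have h5 : 2*c*(L2-d) ≤ (a+b)*(L2-d) := by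
      apply mul_le_mul_of_nonneg_right (by linarith) (by linarith)
    have h6 : 0 < L2*(c+d) - 2*(c*d) := by linarith
    linarith [h1, h2, h3, h4, h5, h6]
  -- compute the logs of the mean quotients
  have hsab : (0:ℝ) < Real.sqrt (a*b) := Real.sqrt_pos.2 (by positivity)
  have hscd : (0:ℝ) < Real.sqrt (c*d) := Real.sqrt_pos.2 (by positivity)
  have hgG : Real.log (geomMean a b / geomMean c d) = g := by
    rw [geomMean, geomMean, Real.log_div hsab.ne' hscd.ne',
      Real.log_sqrt (by positivity), Real.log_sqrt (by positivity),
      Real.log_mul ha.ne' hb.ne', Real.log_mul hc.ne' hd.ne', hgdef, hp, hq, hr, hs]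
    ring
  have hIab : Real.log (identricMean a b) = (a*p - b*q)/(a-b) - 1 := by
    rw [identricMean, if_neg hne1]
    have h1 : (0:ℝ) < a ^ a / b ^ b := div_pos (Real.rpow_pos_of_pos ha a) (Real.rpow_pos_of_pos hb b)
    rw [Real.log_mul (by positivity) (Real.rpow_pos_of_pos h1 _).ne',
      Real.log_rpow h1, Real.log_div (Real.rpow_pos_of_pos ha a).ne' (Real.rpow_pos_of_pos hb b).ne',
      Real.log_rpow ha, Real.log_rpow hb, one_div (Real.exp 1), Real.log_inv, Real.log_exp,
      hp, hq]
    ring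
  have hIcd : Real.log (identricMean c d) = (c*r - d*s)/(c-d) - 1 := by
    rw [identricMean, if_neg hne2]
    have h1 : (0:ℝ) < c ^ c / d ^ d := div_pos (Real.rpow_pos_of_pos hc c) (Real.rpow_pos_of_pos hd d)
    rw [Real.log_mul (by positivity) (Real.rpow_pos_of_pos h1 _).ne',
      Real.log_rpow h1, Real.log_div (Real.rpow_pos_of_pos hc c).ne' (Real.rpow_pos_of_pos hd d).ne',
      Real.log_rpow hc, Real.log_rpow hd, one_div (Real.exp 1), Real.log_inv, Real.log_exp,
      hr, hs]
    ring
  have hI1 : (0:ℝ) < identricMean a b := by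
    rw [identricMean, if_neg hne1]
    positivity
  have hI2 : (0:ℝ) < identricMean c d := by
    rw [identricMean, if_neg hne2]
    positivity
  obtain ⟨N, hNdef⟩ : ∃ N:ℝ, N = (a*p - b*q)/(a-b) - (c*r - d*s)/(c-d) := ⟨_, rfl⟩
  have hgI : Real.log (identricMean a b / identricMean c d) = N := by
    rw [Real.log_div hI1.ne' hI2.ne', hIab, hIcd, hNdef]
    ring
  -- key algebraic identity linking everything
  have hab' : a - b ≠ 0 := sub_ne_zero.2 hne1
  have hcd' : c - d ≠ 0 := sub_ne_zero.2 hne2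
  have hpq' : p - q ≠ 0 := hDa.ne'
  have hrs' : r - s ≠ 0 := hDc.ne'
  have e1 : (a*p - b*q)/(a-b) = (p+q)/2 + (a+b)/(2*L1) := by
    rw [hL1def]
    field_simp [hab', hpq']
    ring
  have e2 : (c*r - d*s)/(c-d) = (r+s)/2 + (c+d)/(2*L2) := by
    rw [hL2def]
    field_simp [hcd', hrs']
    ring
  have hNval : N = g + (a+b)/(2*L1) - (c+d)/(2*L2) := by
    rw [hNdef, e1, e2, hgdef]; ring
  have hNkey : (L1*N - g*L2)*(2*L2) = 2*(L1-L2)*L2*g + (a+b)*L2 - L1*(c+d) := by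
    rw [hNval]
    field_simp [hL1.ne', hL2.ne']
    ring
  have h2L2 : (0:ℝ) < 2*L2 := by linarith
  have hfin : g*L2 < L1*N := by
    by_contra hcon
    push_neg at hcon
    have hprod : 0 ≤ (g*L2 - L1*N)*(2*L2) :=
      mul_nonneg (by linarith) h2L2.le
    linarith [hNkey, hT, hprod, (by ring : (g*L2 - L1*N)*(2*L2) = -((L1*N - g*L2)*(2*L2)))]
  have hNpos : 0 < N := by
    by_contra hcon
    push_neg at hcon
    have : L1*N ≤ 0 := mul_nonpos_of_nonneg_of_nonpos hL1.le hcon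
    linarith [mul_pos hgpos hL2]
  rw [hgG, hgI, gt_iff_lt]
  have e1 : logMean a b = L1 := by rw [logMean, if_neg hne1, hL1def, hp, hq]
  have e2 : logMean c d = L2 := by rw [logMean, if_neg hne2, hL2def, hr, hs]
  rw [e1, e2, div_lt_div_iff₀ hNpos hL2]
  exact hfin
end

section
/- Suppose a ≥ b ≥ c ≥ d > 0 and ad > bc. Then H(a,b)/H(c,d) < G(a,b)/G(c,d) < L(a,b)/L(c,d) < I(a,b)/I(c,d) < A(a,b)/A(c,d), where H, G, L, I, A are the harmonic, geometric, logarithmic, identric, and arithmetic means. If ad < bc, all inequalities reverse; if ad = bc, all become equalities. -/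
noncomputable def arithMean (x y : ℝ) : ℝ := (x + y) / 2

noncomputable def harmMean (x y : ℝ) : ℝ := 2 * x * y / (x + y)

open Real Set Filter

lemma sinh_lt_mul_cosh {t : ℝ} (ht : 0 < t) : Real.sinh t < t * Real.cosh t := by
  have H : StrictMonoOn (fun s : ℝ => s * Real.cosh s - Real.sinh s) (Set.Ici 0) := by
    apply strictMonoOn_of_deriv_pos (convex_Ici 0)
    · exact ((continuous_id.mul Real.continuous_cosh).sub Real.continuous_sinh).continuousOn
    · intro s hs
      rw [interior_Ici, Set.mem_Ioi] at hs
      have h1 : HasDerivAt (fun s : ℝ => s * Real.cosh s - Real.sinh s)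
          (1 * Real.cosh s + s * Real.sinh s - Real.cosh s) s :=
        ((hasDerivAt_id s).mul (Real.hasDerivAt_cosh s)).sub (Real.hasDerivAt_sinh s)
      rw [h1.deriv]
      have hsp : 0 < Real.sinh s := Real.sinh_pos_iff.mpr hs
      nlinarith
  have := H (Set.self_mem_Ici) (Set.mem_Ici.mpr ht.le) ht
  simp only [Real.sinh_zero, Real.cosh_zero, mul_one, zero_mul, sub_zero, zero_sub, neg_zero] at this
  linarith

lemma tendsto_sinh_div : Tendsto (fun t : ℝ => Real.sinh t / t) (nhdsWithin 0 (Set.Ioi 0)) (nhds 1) := by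
  have h := (Real.hasDerivAt_sinh 0)
  rw [hasDerivAt_iff_tendsto_slope] at h
  have heq : slope Real.sinh 0 = fun t : ℝ => Real.sinh t / t := by
    funext t
    simp [slope_def_field]
  rw [heq, Real.cosh_zero] at h
  exact h.mono_left (nhdsWithin_mono 0 (fun x hx => ne_of_gt hx))

lemma tendsto_tcoth : Tendsto (fun t : ℝ => t * Real.cosh t / Real.sinh t) (nhdsWithin 0 (Set.Ioi 0)) (nhds 1) := by
  have h1 : Tendsto (fun t : ℝ => Real.cosh t) (nhdsWithin 0 (Set.Ioi 0)) (nhds 1) := by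
    have := (Real.continuous_cosh.tendsto 0)
    rw [Real.cosh_zero] at this
    exact this.mono_left nhdsWithin_le_nhds
  have h2 := h1.div tendsto_sinh_div one_ne_zero
  simp only [div_one] at h2
  apply h2.congr'
  filter_upwards [self_mem_nhdsWithin] with t (ht : t ∈ Set.Ioi 0)
  have ht0 : (t:ℝ) ≠ 0 := ne_of_gt ht
  simp only [Pi.div_apply]; rw [div_div_eq_mul_div]
  ring

noncomputable def Fb (t : ℝ) : ℝ :=
  if t = 0 then -1 else Real.log (Real.sinh t / t) - t * Real.cosh t / Real.sinh t

noncomputable def Qb (t : ℝ) : ℝ :=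
  if t = 0 then 0 else t * Real.cosh t / Real.sinh t - 1 - Real.log (Real.cosh t)

lemma hasDerivAt_tcoth {s : ℝ} (hs : 0 < s) :
    HasDerivAt (fun t : ℝ => t * Real.cosh t / Real.sinh t)
      (Real.cosh s / Real.sinh s - s / Real.sinh s ^ 2) s := by
  have hS : 0 < Real.sinh s := Real.sinh_pos_iff.mpr hs
  have h : HasDerivAt (fun t : ℝ => t * Real.cosh t / Real.sinh t)
      (((1 * Real.cosh s + s * Real.sinh s) * Real.sinh s - s * Real.cosh s * Real.cosh s) / Real.sinh s ^ 2) s :=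
    (((hasDerivAt_id s).mul (Real.hasDerivAt_cosh s)).div (Real.hasDerivAt_sinh s) (ne_of_gt hS))
  convert h using 1
  have hC : Real.cosh s * Real.cosh s = 1 + Real.sinh s ^ 2 := by
    nlinarith [Real.cosh_sq_sub_sinh_sq s]
  field_simp
  linear_combination s * hC

lemma Fb_anti : StrictAntiOn Fb (Set.Ici 0) := by
  apply strictAntiOn_of_deriv_neg (convex_Ici 0)
  · -- continuity
    intro s hs
    rcases eq_or_lt_of_le (Set.mem_Ici.mp hs) with h0 | h0
    · -- s = 0
      subst h0
      rw [← Set.Ioi_insert]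
      apply (continuousWithinAt_insert_self).mpr
      unfold ContinuousWithinAt
      have hFb0 : Fb 0 = -1 := by simp [Fb]
      rw [hFb0]
      have hlog : Tendsto (fun t : ℝ => Real.log (Real.sinh t / t)) (nhdsWithin 0 (Set.Ioi 0)) (nhds 0) := by
        have := (Real.continuousAt_log (one_ne_zero)).tendsto.comp tendsto_sinh_div
        simpa [Function.comp_def] using this
      have h := hlog.sub tendsto_tcoth
      rw [show (0:ℝ) - 1 = -1 by ring] at h
      apply h.congr'
      filter_upwards [self_mem_nhdsWithin] with t (ht : t ∈ Set.Ioi 0)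
      simp [Fb, ne_of_gt (Set.mem_Ioi.mp ht)]
    · apply ContinuousAt.continuousWithinAt
      have hS : 0 < Real.sinh s := Real.sinh_pos_iff.mpr h0
      have : ∀ᶠ t in nhds s, Fb t = Real.log (Real.sinh t / t) - t * Real.cosh t / Real.sinh t := by
        filter_upwards [eventually_gt_nhds h0] with t ht
        simp [Fb, ne_of_gt ht]
      rw [continuousAt_congr this]
      have h1 : ContinuousAt (fun t : ℝ => Real.sinh t / t) s :=
        (Real.continuous_sinh.continuousAt).div continuousAt_id (ne_of_gt h0)
      have h2 : ContinuousAt (fun t : ℝ => Real.log (Real.sinh t / t)) s :=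
        (Real.continuousAt_log (by positivity)).comp h1
      exact h2.sub (((continuousAt_id.mul Real.continuous_cosh.continuousAt).div
        Real.continuous_sinh.continuousAt (ne_of_gt hS)))
  · intro s hs
    rw [interior_Ici, Set.mem_Ioi] at hs
    have hS : 0 < Real.sinh s := Real.sinh_pos_iff.mpr hs
    have heq : ∀ᶠ t in nhds s, Fb t = Real.log (Real.sinh t / t) - t * Real.cosh t / Real.sinh t := by
      filter_upwards [eventually_gt_nhds hs] with t ht
      simp [Fb, ne_of_gt ht]
    rw [Filter.EventuallyEq.deriv_eq heq]
    have hlog : HasDerivAt (fun t : ℝ => Real.log (Real.sinh t / t))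
        ((Real.cosh s * s - Real.sinh s * 1) / s ^ 2 / (Real.sinh s / s)) s := by
      have hdiv : HasDerivAt (fun t : ℝ => Real.sinh t / t)
          ((Real.cosh s * s - Real.sinh s * 1) / s ^ 2) s :=
        (Real.hasDerivAt_sinh s).div (hasDerivAt_id s) (ne_of_gt hs)
      exact hdiv.log (by positivity)
    have h := (hlog.sub (hasDerivAt_tcoth hs))
    rw [HasDerivAt.deriv (f := fun t : ℝ => Real.log (Real.sinh t / t) - t * Real.cosh t / Real.sinh t) h]
    have key : (Real.cosh s * s - Real.sinh s * 1) / s ^ 2 / (Real.sinh s / s)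
        - (Real.cosh s / Real.sinh s - s / Real.sinh s ^ 2)
        = (s ^ 2 - Real.sinh s ^ 2) / (s * Real.sinh s ^ 2) := by
      field_simp
      ring
    rw [key]
    have hss : s < Real.sinh s := (Real.self_lt_sinh_iff).mpr hs
    apply div_neg_of_neg_of_pos
    · nlinarith
    · positivity

lemma Qb_anti : StrictAntiOn Qb (Set.Ici 0) := by
  apply strictAntiOn_of_deriv_neg (convex_Ici 0)
  · intro s hs
    rcases eq_or_lt_of_le (Set.mem_Ici.mp hs) with h0 | h0
    · subst h0
      rw [← Set.Ioi_insert]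
      apply (continuousWithinAt_insert_self).mpr
      unfold ContinuousWithinAt
      have hQb0 : Qb 0 = 0 := by simp [Qb]
      rw [hQb0]
      have hlogcosh : Tendsto (fun t : ℝ => Real.log (Real.cosh t)) (nhdsWithin 0 (Set.Ioi 0)) (nhds 0) := by
        have h1 : ContinuousAt (fun t : ℝ => Real.log (Real.cosh t)) 0 :=
          (Real.continuousAt_log (by positivity)).comp Real.continuous_cosh.continuousAt
        have h2 := h1.tendsto
        simp only [Real.cosh_zero, Real.log_one] at h2
        exact h2.mono_left nhdsWithin_le_nhds
      have h := (tendsto_tcoth.sub (tendsto_const_nhds (x := (1:ℝ)))).sub hlogcosh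
      rw [show (1:ℝ) - 1 - 0 = 0 by ring] at h
      apply h.congr'
      filter_upwards [self_mem_nhdsWithin] with t (ht : t ∈ Set.Ioi 0)
      simp [Qb, ne_of_gt (Set.mem_Ioi.mp ht)]
    · apply ContinuousAt.continuousWithinAt
      have hS : 0 < Real.sinh s := Real.sinh_pos_iff.mpr h0
      have : ∀ᶠ t in nhds s, Qb t = t * Real.cosh t / Real.sinh t - 1 - Real.log (Real.cosh t) := by
        filter_upwards [eventually_gt_nhds h0] with t ht
        simp [Qb, ne_of_gt ht]
      rw [continuousAt_congr this]
      have h1 : ContinuousAt (fun t : ℝ => t * Real.cosh t / Real.sinh t) s :=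
        (continuousAt_id.mul Real.continuous_cosh.continuousAt).div
          Real.continuous_sinh.continuousAt (ne_of_gt hS)
      exact (h1.sub continuousAt_const).sub
        ((Real.continuousAt_log (by positivity)).comp Real.continuous_cosh.continuousAt)
  · intro s hs
    rw [interior_Ici, Set.mem_Ioi] at hs
    have hS : 0 < Real.sinh s := Real.sinh_pos_iff.mpr hs
    have hC : 0 < Real.cosh s := Real.cosh_pos s
    have heq : ∀ᶠ t in nhds s, Qb t = t * Real.cosh t / Real.sinh t - 1 - Real.log (Real.cosh t) := by
      filter_upwards [eventually_gt_nhds hs] with t ht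
      simp [Qb, ne_of_gt ht]
    rw [Filter.EventuallyEq.deriv_eq heq]
    have hlc : HasDerivAt (fun t : ℝ => Real.log (Real.cosh t)) (Real.sinh s / Real.cosh s) s :=
      (Real.hasDerivAt_cosh s).log (ne_of_gt hC)
    have h := ((hasDerivAt_tcoth hs).sub (hasDerivAt_const s (1:ℝ))).sub hlc
    rw [HasDerivAt.deriv (f := fun t : ℝ => t * Real.cosh t / Real.sinh t - 1 - Real.log (Real.cosh t)) h]
    have hCsq : Real.cosh s ^ 2 = 1 + Real.sinh s ^ 2 := by
      nlinarith [Real.cosh_sq_sub_sinh_sq s]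
    have key : Real.cosh s / Real.sinh s - s / Real.sinh s ^ 2 - 0 - Real.sinh s / Real.cosh s
        = (Real.sinh s - s * Real.cosh s) / (Real.sinh s ^ 2 * Real.cosh s) := by
      field_simp
      linear_combination Real.sinh s * hCsq
    rw [key]
    apply div_neg_of_neg_of_pos
    · linarith [sinh_lt_mul_cosh hs]
    · positivity

noncomputable def nH (t : ℝ) : ℝ := 1 / Real.cosh t
noncomputable def nL (t : ℝ) : ℝ := if t = 0 then 1 else Real.sinh t / t
noncomputable def nI (t : ℝ) : ℝ :=
  if t = 0 then 1 else Real.exp (t * Real.cosh t / Real.sinh t - 1)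
noncomputable def nA (t : ℝ) : ℝ := Real.cosh t

lemma nH_pos (t : ℝ) : 0 < nH t := by
  unfold nH; positivity

lemma nA_pos (t : ℝ) : 0 < nA t := Real.cosh_pos t

lemma nL_pos {t : ℝ} (ht : 0 ≤ t) : 0 < nL t := by
  unfold nL
  rcases eq_or_lt_of_le ht with h | h
  · simp [← h]
  · rw [if_neg (ne_of_gt h)]
    exact div_pos (Real.sinh_pos_iff.mpr h) h

lemma nI_pos (t : ℝ) : 0 < nI t := by
  unfold nI
  split
  · norm_num
  · exact Real.exp_pos _

-- representation
lemma rep (x y : ℝ) (hy : 0 < y) (hxy : y ≤ x) :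
    harmMean x y = Real.sqrt (x * y) * nH ((Real.log x - Real.log y) / 2) ∧
    geomMean x y = Real.sqrt (x * y) * 1 ∧
    logMean x y = Real.sqrt (x * y) * nL ((Real.log x - Real.log y) / 2) ∧
    identricMean x y = Real.sqrt (x * y) * nI ((Real.log x - Real.log y) / 2) ∧
    arithMean x y = Real.sqrt (x * y) * nA ((Real.log x - Real.log y) / 2) := by
  have hx : 0 < x := lt_of_lt_of_le hy hxy
  rcases eq_or_lt_of_le hxy with rfl | hlt
  · -- x = y
    have hu : (Real.log y - Real.log y) / 2 = 0 := by ring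
    have hsq : Real.sqrt (y * y) = y := Real.sqrt_mul_self hy.le
    rw [hu, hsq]
    refine ⟨?_, ?_, ?_, ?_, ?_⟩
    · unfold harmMean nH
      rw [Real.cosh_zero]
      field_simp
      ring
    · unfold geomMean
      rw [Real.sqrt_mul_self hy.le, mul_one]
    · unfold logMean nL
      simp
    · unfold identricMean nI
      simp
    · unfold arithMean nA
      rw [Real.cosh_zero]
      ring
  · -- y < x
    set u : ℝ := (Real.log x - Real.log y) / 2 with hu
    have hup : 0 < u := by
      have := Real.log_lt_log hy hlt
      unfold u; linarith
    set p : ℝ := Real.sqrt (x * y) with hp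
    have hpp : 0 < p := Real.sqrt_pos.mpr (by positivity)
    have hpe : p = Real.exp ((Real.log x + Real.log y) / 2) := by
      rw [hp, show x * y = (Real.exp ((Real.log x + Real.log y) / 2)) ^ 2 by
        rw [sq, ← Real.exp_add,
          show (Real.log x + Real.log y) / 2 + (Real.log x + Real.log y) / 2
            = Real.log x + Real.log y by ring,
          Real.exp_add, Real.exp_log hx, Real.exp_log hy]]
      exact Real.sqrt_sq (Real.exp_pos _).le
    have hxe : x = p * Real.exp u := by
      rw [hpe, ← Real.exp_add]
      rw [show (Real.log x + Real.log y) / 2 + u = Real.log x by unfold u; ring]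
      rw [Real.exp_log hx]
    have hye : y = p * Real.exp (-u) := by
      rw [hpe, ← Real.exp_add]
      rw [show (Real.log x + Real.log y) / 2 + -u = Real.log y by unfold u; ring]
      rw [Real.exp_log hy]
    have hcosh : Real.cosh u = (Real.exp u + Real.exp (-u)) / 2 := Real.cosh_eq u
    have hsinh : Real.sinh u = (Real.exp u - Real.exp (-u)) / 2 := Real.sinh_eq u
    have hee : Real.exp u * Real.exp (-u) = 1 := by
      rw [← Real.exp_add]; simp
    have hxmy : x - y = 2 * p * Real.sinh u := by
      rw [hxe, hye, hsinh]; ring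
    have hxpy : x + y = 2 * p * Real.cosh u := by
      rw [hxe, hye, hcosh]; ring
    have hSp : 0 < Real.sinh u := Real.sinh_pos_iff.mpr hup
    have hCp : 0 < Real.cosh u := Real.cosh_pos u
    have hxy' : x ≠ y := ne_of_gt hlt
    have hlxy : Real.log x - Real.log y = 2 * u := by unfold u; ring
    refine ⟨?_, ?_, ?_, ?_, ?_⟩
    · unfold harmMean nH
      have hxy2 : 2 * x * y = 2 * p ^ 2 := by
        rw [hxe, hye]; nlinarith [hee]
      rw [hxpy, hxy2]
      field_simp
    · unfold geomMean; rw [mul_one]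
    · unfold logMean nL
      rw [if_neg hxy', if_neg (ne_of_gt hup), hxmy, hlxy]
      field_simp
    · unfold identricMean nI
      rw [if_neg hxy', if_neg (ne_of_gt hup)]
      have h1 : x ^ x = Real.exp (Real.log x * x) := by
        rw [Real.rpow_def_of_pos hx]
      have h2 : y ^ y = Real.exp (Real.log y * y) := by
        rw [Real.rpow_def_of_pos hy]
      rw [h1, h2, ← Real.exp_sub]
      rw [show (Real.exp (Real.log x * x - Real.log y * y)) ^ (1 / (x - y))
          = Real.exp ((Real.log x * x - Real.log y * y) * (1 / (x - y))) by
        rw [Real.rpow_def_of_pos (Real.exp_pos _), Real.log_exp]]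
      rw [show (1 : ℝ) / Real.exp 1 = Real.exp (-1) by rw [Real.exp_neg, one_div]]
      rw [← Real.exp_add, hpe, ← Real.exp_add]
      congr 1
      have hcs : u * Real.cosh u / Real.sinh u = u * (x + y) / (x - y) := by
        rw [hxmy, hxpy]
        field_simp
      have hxmy0 : x - y ≠ 0 := sub_ne_zero.mpr hxy'
      have hkey : (Real.log x * x - Real.log y * y) * (1 / (x - y)) =
          (Real.log x + Real.log y) / 2 + u * (x + y) / (x - y) := by
        rw [hu]
        field_simp
        ring
      rw [hcs, hkey]
      ring
    · unfold arithMean nA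
      rw [hxpy]; ring

-- cross inequalities, u > v ≥ 0
lemma cross1 {u v : ℝ} (hv : 0 ≤ v) (huv : v < u) : nH u < nH v := by
  unfold nH
  have h : Real.cosh v < Real.cosh u := by
    rw [Real.cosh_lt_cosh, abs_of_nonneg hv, abs_of_nonneg (hv.trans huv.le)]
    exact huv
  have h1 : 0 < Real.cosh v := Real.cosh_pos v
  exact one_div_lt_one_div_of_lt h1 h

lemma cross2 {u v : ℝ} (hv : 0 ≤ v) (huv : v < u) : nL v < nL u := by
  have hu : 0 < u := lt_of_le_of_lt hv huv
  have hmono : StrictMonoOn (fun t : ℝ => Real.sinh t / t) (Set.Ioi 0) := by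
    apply strictMonoOn_of_deriv_pos (convex_Ioi 0)
    · apply ContinuousOn.div Real.continuous_sinh.continuousOn continuousOn_id
      intro t ht
      exact ne_of_gt ht
    · intro s hs
      rw [interior_Ioi, Set.mem_Ioi] at hs
      have h : HasDerivAt (fun t : ℝ => Real.sinh t / t)
          ((Real.cosh s * s - Real.sinh s * 1) / s ^ 2) s :=
        (Real.hasDerivAt_sinh s).div (hasDerivAt_id s) (ne_of_gt hs)
      rw [h.deriv]
      apply div_pos
      · nlinarith [sinh_lt_mul_cosh hs]
      · positivity
  rcases eq_or_lt_of_le hv with rfl | hv0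
  · unfold nL
    rw [if_pos rfl, if_neg (ne_of_gt hu)]
    rw [lt_div_iff₀ hu, one_mul]
    exact (Real.self_lt_sinh_iff).mpr hu
  · unfold nL
    rw [if_neg (ne_of_gt hv0), if_neg (ne_of_gt hu)]
    exact hmono (Set.mem_Ioi.mpr hv0) (Set.mem_Ioi.mpr hu) huv

lemma nL_eq_exp_Fb (t : ℝ) (ht : 0 ≤ t) : nL t = Real.exp (Fb t + 1) * nI t := by
  unfold nL nI Fb
  rcases eq_or_lt_of_le ht with rfl | ht0
  · simp
  · rw [if_neg (ne_of_gt ht0), if_neg (ne_of_gt ht0), if_neg (ne_of_gt ht0)]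
    rw [← Real.exp_add]
    rw [show Real.log (Real.sinh t / t) - t * Real.cosh t / Real.sinh t + 1 +
        (t * Real.cosh t / Real.sinh t - 1) = Real.log (Real.sinh t / t) by ring]
    rw [Real.exp_log (div_pos (Real.sinh_pos_iff.mpr ht0) ht0)]

lemma nI_eq_exp_Qb (t : ℝ) (ht : 0 ≤ t) : nI t = Real.exp (Qb t) * nA t := by
  unfold nI nA Qb
  rcases eq_or_lt_of_le ht with rfl | ht0
  · simp
  · rw [if_neg (ne_of_gt ht0), if_neg (ne_of_gt ht0)]
    conv_rhs => rw [Real.exp_sub, Real.exp_log (Real.cosh_pos t),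
      div_mul_cancel₀ _ (ne_of_gt (Real.cosh_pos t))]

lemma cross3 {u v : ℝ} (hv : 0 ≤ v) (huv : v < u) : nL u * nI v < nI u * nL v := by
  have hu : (0:ℝ) ≤ u := hv.trans huv.le
  rw [nL_eq_exp_Fb u hu, nL_eq_exp_Fb v hv]
  have hF : Fb u < Fb v := Fb_anti (Set.mem_Ici.mpr hv) (Set.mem_Ici.mpr hu) huv
  have hexp : Real.exp (Fb u + 1) < Real.exp (Fb v + 1) := Real.exp_lt_exp.mpr (by linarith)
  nlinarith [nI_pos u, nI_pos v, mul_pos (nI_pos u) (nI_pos v)]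

lemma cross4 {u v : ℝ} (hv : 0 ≤ v) (huv : v < u) : nI u * nA v < nA u * nI v := by
  have hu : (0:ℝ) ≤ u := hv.trans huv.le
  rw [nI_eq_exp_Qb u hu, nI_eq_exp_Qb v hv]
  have hQ : Qb u < Qb v := Qb_anti (Set.mem_Ici.mpr hv) (Set.mem_Ici.mpr hu) huv
  have hexp : Real.exp (Qb u) < Real.exp (Qb v) := Real.exp_lt_exp.mpr hQ
  unfold nA
  nlinarith [Real.exp_pos (Qb u),
    mul_lt_mul_of_pos_right hexp (mul_pos (Real.cosh_pos u) (Real.cosh_pos v))]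

set_option maxHeartbeats 1000000 in
theorem stmt17 (a b c d : ℝ) (hab : a ≥ b) (hbc : b ≥ c) (hcd : c ≥ d) (hd : d > 0) :
    (a * d > b * c →
      harmMean a b / harmMean c d < geomMean a b / geomMean c d ∧
      geomMean a b / geomMean c d < logMean a b / logMean c d ∧
      logMean a b / logMean c d < identricMean a b / identricMean c d ∧
      identricMean a b / identricMean c d < arithMean a b / arithMean c d) ∧
    (a * d < b * c →
      harmMean a b / harmMean c d > geomMean a b / geomMean c d ∧
      geomMean a b / geomMean c d > logMean a b / logMean c d ∧
      logMean a b / logMean c d > identricMean a b / identricMean c d ∧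
      identricMean a b / identricMean c d > arithMean a b / arithMean c d) ∧
    (a * d = b * c →
      harmMean a b / harmMean c d = geomMean a b / geomMean c d ∧
      geomMean a b / geomMean c d = logMean a b / logMean c d ∧
      logMean a b / logMean c d = identricMean a b / identricMean c d ∧
      identricMean a b / identricMean c d = arithMean a b / arithMean c d) := by
  have hc : 0 < c := lt_of_lt_of_le hd hcd
  have hb : 0 < b := lt_of_lt_of_le hc hbc
  have ha : 0 < a := lt_of_lt_of_le hb hab
  obtain ⟨rH1, rG1, rL1, rI1, rA1⟩ := rep a b hb hab
  obtain ⟨rH2, rG2, rL2, rI2, rA2⟩ := rep c d hd hcd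
  set u : ℝ := (Real.log a - Real.log b) / 2 with hu
  set v : ℝ := (Real.log c - Real.log d) / 2 with hv
  set p : ℝ := Real.sqrt (a * b) with hpdef
  set q : ℝ := Real.sqrt (c * d) with hqdef
  have hp : 0 < p := Real.sqrt_pos.mpr (by positivity)
  have hq : 0 < q := Real.sqrt_pos.mpr (by positivity)
  have hu0 : 0 ≤ u := by
    have := Real.log_le_log hb hab
    rw [hu]; linarith
  have hv0 : 0 ≤ v := by
    have := Real.log_le_log hd hcd
    rw [hv]; linarith
  have hpq : 0 < p * q := mul_pos hp hq
  refine ⟨?_, ?_, ?_⟩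
  · -- a*d > b*c : v < u
    intro h
    have hvu : v < u := by
      have hlog : Real.log (b * c) < Real.log (a * d) := Real.log_lt_log (by positivity) h
      rw [Real.log_mul (ne_of_gt hb) (ne_of_gt hc), Real.log_mul (ne_of_gt ha) (ne_of_gt hd)] at hlog
      rw [hu, hv]; linarith
    refine ⟨?_, ?_, ?_, ?_⟩
    · rw [rH1, rH2, rG1, rG2, div_lt_div_iff₀ (mul_pos hq (nH_pos v)) (mul_pos hq one_pos)]
      calc p * nH u * (q * 1) = p * q * (nH u * 1) := by ring
        _ < p * q * (1 * nH v) := by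
            exact mul_lt_mul_of_pos_left (by simpa using cross1 hv0 hvu) hpq
        _ = p * 1 * (q * nH v) := by ring
    · rw [rG1, rG2, rL1, rL2, div_lt_div_iff₀ (mul_pos hq one_pos) (mul_pos hq (nL_pos hv0))]
      calc p * 1 * (q * nL v) = p * q * (1 * nL v) := by ring
        _ < p * q * (nL u * 1) := by
            exact mul_lt_mul_of_pos_left (by simpa using cross2 hv0 hvu) hpq
        _ = p * nL u * (q * 1) := by ring
    · rw [rL1, rL2, rI1, rI2, div_lt_div_iff₀ (mul_pos hq (nL_pos hv0)) (mul_pos hq (nI_pos v))]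
      calc p * nL u * (q * nI v) = p * q * (nL u * nI v) := by ring
        _ < p * q * (nI u * nL v) := by
            exact mul_lt_mul_of_pos_left (cross3 hv0 hvu) hpq
        _ = p * nI u * (q * nL v) := by ring
    · rw [rI1, rI2, rA1, rA2, div_lt_div_iff₀ (mul_pos hq (nI_pos v)) (mul_pos hq (nA_pos v))]
      calc p * nI u * (q * nA v) = p * q * (nI u * nA v) := by ring
        _ < p * q * (nA u * nI v) := by
            exact mul_lt_mul_of_pos_left (cross4 hv0 hvu) hpq
        _ = p * nA u * (q * nI v) := by ring
  · -- a*d < b*c : u < v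
    intro h
    have huv : u < v := by
      have hlog : Real.log (a * d) < Real.log (b * c) := Real.log_lt_log (by positivity) h
      rw [Real.log_mul (ne_of_gt hb) (ne_of_gt hc), Real.log_mul (ne_of_gt ha) (ne_of_gt hd)] at hlog
      rw [hu, hv]; linarith
    refine ⟨?_, ?_, ?_, ?_⟩
    · rw [gt_iff_lt, rH1, rH2, rG1, rG2,
        div_lt_div_iff₀ (mul_pos hq one_pos) (mul_pos hq (nH_pos v))]
      calc p * 1 * (q * nH v) = p * q * (1 * nH v) := by ring
        _ < p * q * (nH u * 1) := by
            exact mul_lt_mul_of_pos_left (by simpa using cross1 hu0 huv) hpq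
        _ = p * nH u * (q * 1) := by ring
    · rw [gt_iff_lt, rG1, rG2, rL1, rL2,
        div_lt_div_iff₀ (mul_pos hq (nL_pos hv0)) (mul_pos hq one_pos)]
      calc p * nL u * (q * 1) = p * q * (nL u * 1) := by ring
        _ < p * q * (1 * nL v) := by
            exact mul_lt_mul_of_pos_left (by simpa using cross2 hu0 huv) hpq
        _ = p * 1 * (q * nL v) := by ring
    · rw [gt_iff_lt, rL1, rL2, rI1, rI2,
        div_lt_div_iff₀ (mul_pos hq (nI_pos v)) (mul_pos hq (nL_pos hv0))]
      calc p * nI u * (q * nL v) = p * q * (nI u * nL v) := by ring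
        _ < p * q * (nL u * nI v) := by
            exact mul_lt_mul_of_pos_left (by have h := cross3 hu0 huv; linarith [h, mul_comm (nI u) (nL v), mul_comm (nL u) (nI v)]) hpq
        _ = p * nL u * (q * nI v) := by ring
    · rw [gt_iff_lt, rI1, rI2, rA1, rA2,
        div_lt_div_iff₀ (mul_pos hq (nA_pos v)) (mul_pos hq (nI_pos v))]
      calc p * nA u * (q * nI v) = p * q * (nA u * nI v) := by ring
        _ < p * q * (nI u * nA v) := by
            exact mul_lt_mul_of_pos_left (by have h := cross4 hu0 huv; linarith [h, mul_comm (nA u) (nI v), mul_comm (nI u) (nA v)]) hpq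
        _ = p * nI u * (q * nA v) := by ring
  · -- a*d = b*c : u = v
    intro h
    have huv : u = v := by
      have hlog : Real.log (a * d) = Real.log (b * c) := by rw [h]
      rw [Real.log_mul (ne_of_gt hb) (ne_of_gt hc), Real.log_mul (ne_of_gt ha) (ne_of_gt hd)] at hlog
      rw [hu, hv]; linarith
    rw [huv] at rH1 rL1 rI1 rA1
    have key : ∀ X : ℝ, 0 < X → p * X / (q * X) = p / q := by
      intro X hX
      rw [mul_comm p X, mul_comm q X, mul_div_mul_left _ _ (ne_of_gt hX)]
    refine ⟨?_, ?_, ?_, ?_⟩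
    · rw [rH1, rH2, rG1, rG2, key _ (nH_pos v), key _ one_pos]
    · rw [rG1, rG2, rL1, rL2, key _ one_pos, key _ (nL_pos hv0)]
    · rw [rL1, rL2, rI1, rI2, key _ (nL_pos hv0), key _ (nI_pos v)]
    · rw [rI1, rI2, rA1, rA2, key _ (nI_pos v), key _ (nA_pos v)]
end
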